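/- Fix R, c, ε, δ > 0 and λ a nonzero real number, and define Π(τ, θ, σ, q; λ) as the determinant of the 5×5 matrix M(τ, θ, σ, q; λ) with rows (−λ, −1, 0, 0, 0), (−Rθ/τ², −λ, R/τ, 1, 0), (0, Rθ/τ + σ, −λc, 0, 1), (0, 1, εσλ/θ², −ελ/θ, 0), (0, 0, 2δqλ/θ³ + 1, 0, −δλ/θ²). Then at any equilibrium point (τ, θ, 0, 0) with τ, θ > 0, setting p_θ = R/τ and λ*² = Rθ/τ² + θ/ε, one has (εθ/(δp_θ))·((λ² − λ*²)/λ)·∂Π/∂q = (2ε²τ/(Rθ³))·λ·(λ² − λ*²)². -/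

import Mathlib

private lemma deriv_affine (A B : ℝ) : deriv (fun s : ℝ => A + B * s) 0 = B := by
  have h : HasDerivAt (fun s : ℝ => A + B * s) B 0 := by
    simpa using ((hasDerivAt_id (0:ℝ)).const_mul B).const_add A
  simpa using h.deriv

set_option maxHeartbeats 2000000 in
/-- The `q`-derivative term of the genuine-nonlinearity computation: with
`Π = det M`, at equilibrium (`σ = q = 0`),
`(εθ/(δp_θ))·((λ² − λ*²)/λ)·∂Π/∂q = (2ε²τ/(Rθ³))·λ·(λ² − λ*²)²`,
where `p_θ = R/τ` and `λ*² = Rθ/τ² + θ/ε`. -/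
theorem dPi_dq_at_equilibrium
    (R c ε δ : ℝ) (hR : 0 < R) (hc : 0 < c) (hε : 0 < ε) (hδ : 0 < δ)
    (lam : ℝ) (hlam : lam ≠ 0) (τ θ : ℝ) (hτ : 0 < τ) (hθ : 0 < θ) :
    (ε * θ / (δ * (R / τ))) * ((lam ^ 2 - (R * θ / τ ^ 2 + θ / ε)) / lam) *
        deriv (fun s : ℝ =>
          Matrix.det !![-lam, -1, 0, 0, 0;
                        -(R * θ) / τ ^ 2, -lam, R / τ, 1, 0;
                        0, R * θ / τ + 0, -lam * c, 0, 1;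
                        0, 1, ε * 0 * lam / θ ^ 2, -(ε * lam) / θ, 0;
                        0, 0, 2 * δ * s * lam / θ ^ 3 + 1, 0, -(δ * lam) / θ ^ 2]) 0
      = (2 * ε ^ 2 * τ / (R * θ ^ 3)) * lam * (lam ^ 2 - (R * θ / τ ^ 2 + θ / ε)) ^ 2 := by
  set f : ℝ → ℝ := fun s : ℝ =>
      Matrix.det !![-lam, -1, 0, 0, 0;
                    -(R * θ) / τ ^ 2, -lam, R / τ, 1, 0;
                    0, R * θ / τ + 0, -lam * c, 0, 1;
                    0, 1, ε * 0 * lam / θ ^ 2, -(ε * lam) / θ, 0;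
                    0, 0, 2 * δ * s * lam / θ ^ 3 + 1, 0, -(δ * lam) / θ ^ 2] with hf
  have heq : f = fun s : ℝ => f 0 + (f 1 - f 0) * s := by
    funext s
    simp only [hf]
    simp [Matrix.det_succ_row_zero, Fin.sum_univ_succ, Fin.succAbove]
    ring
  rw [heq, deriv_affine]
  have h1 : f 1 - f 0 =
      2 * δ * lam / θ ^ 3 * (ε * lam ^ 3 / θ - lam - R * ε * lam / τ ^ 2) := by
    simp only [hf]
    simp [Matrix.det_succ_row_zero, Fin.sum_univ_succ, Fin.succAbove]
    field_simp
    ring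
  rw [h1]
  field_simp
  ring
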